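/- Let E₀ ⊂ 𝒞Ω and let 𝓕 := { E ⊂ ℝⁿ : E is an s-minimal set in Ω and E \ Ω = E₀ }, and assume 𝓕 is nonempty. Then there exists E ∈ 𝓕 with |E ∩ Ω| = sup_{F ∈ 𝓕} |F ∩ Ω|; any two such maximal-volume elements of 𝓕 coincide up to a set of Lebesgue measure zero; and every F ∈ 𝓕 satisfies |F \ E| = 0 (i.e. E contains, up to null sets, every element of 𝓕). Analogously, there exists a unique-up-to-null-sets E' ∈ 𝓕 with |E' ∩ Ω| = inf_{F ∈ 𝓕} |F ∩ Ω|, and every F ∈ 𝓕 satisfies |E' \ F| = 0. -/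

import Mathlib

open MeasureTheory Set Filter Metric ENNReal

noncomputable section
set_option maxHeartbeats 1000000

/-- Euclidean space `ℝⁿ`. -/
abbrev Rn (n : ℕ) : Type := EuclideanSpace ℝ (Fin n)

/-- `Q(Ω) := ℝ²ⁿ \ (𝒞Ω × 𝒞Ω)`. -/
def QQ {n : ℕ} (Ω : Set (Rn n)) : Set (Rn n × Rn n) := (Ωᶜ ×ˢ Ωᶜ)ᶜ

/-- A bounded open set has Lipschitz boundary: near every boundary point, in suitable
orthonormal coordinates, the set coincides with the region above the graph of a
Lipschitz function. -/
def HasLipschitzBoundary {n : ℕ} (Ω : Set (Rn n)) : Prop :=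
  ∀ x ∈ frontier Ω, ∃ r : ℝ, 0 < r ∧ ∃ ν : Rn n, ‖ν‖ = 1 ∧
    ∃ (L : NNReal) (ψ : Rn n → ℝ), LipschitzWith L ψ ∧
      Ω ∩ Metric.ball x r =
        {y ∈ Metric.ball x r | ψ (y - (inner ℝ y ν : ℝ) • ν) < (inner ℝ y ν : ℝ)}

/-- The Gagliardo `W^{s,1}(Ω)` seminorm `[u]_{W^{s,1}(Ω)}` (as an extended real). -/
def gagliardo (n : ℕ) (s : ℝ) (Ω : Set (Rn n)) (u : Rn n → ℝ) : ℝ≥0∞ :=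
  ∫⁻ x in Ω, ∫⁻ y in Ω, ENNReal.ofReal (|u x - u y| / dist x y ^ ((n : ℝ) + s))

/-- The space `𝒲^s(Ω)` of measurable functions `u : ℝⁿ → ℝ` whose restriction to `Ω`
belongs to `W^{s,1}(Ω)`. -/
def WsSpace (n : ℕ) (s : ℝ) (Ω : Set (Rn n)) : Set (Rn n → ℝ) :=
  {u | Measurable u ∧ IntegrableOn u Ω ∧ gagliardo n s Ω u < ⊤}

/-- `u` is an `s`-minimal function in `Ω`. -/
def IsMinimalFn (n : ℕ) (s : ℝ) (Ω : Set (Rn n)) (u : Rn n → ℝ) : Prop :=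
  u ∈ WsSpace n s Ω ∧
    ∀ v ∈ WsSpace n s Ω, (∀ᵐ x ∂(volume.restrict Ωᶜ), v x = u x) →
      ∫ p in QQ Ω, (|u p.1 - u p.2| - |v p.1 - v p.2|) / dist p.1 p.2 ^ ((n : ℝ) + s) ≤ 0

/-- The characteristic function `χ_E`. -/
def chi {n : ℕ} (E : Set (Rn n)) : Rn n → ℝ := E.indicator (fun _ => (1 : ℝ))

/-- The `s`-fractional perimeter `Per_s(E, Ω)` (as an extended real). -/
def perS (n : ℕ) (s : ℝ) (Ω E : Set (Rn n)) : ℝ≥0∞ :=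
  (1 / 2 : ℝ≥0∞) * ∫⁻ p in QQ Ω,
    ENNReal.ofReal (|chi E p.1 - chi E p.2| / dist p.1 p.2 ^ ((n : ℝ) + s))

/-- `E` is an `s`-minimal set in `Ω`. -/
def IsMinimalSet (n : ℕ) (s : ℝ) (Ω E : Set (Rn n)) : Prop :=
  MeasurableSet E ∧ perS n s Ω E < ⊤ ∧
    ∀ F : Set (Rn n), MeasurableSet F → F \ Ω = E \ Ω → perS n s Ω E ≤ perS n s Ω F

/-- The enlarged set `Ω_t := {y : dist(y, Ω) < t}`. -/
def nbhd {n : ℕ} (Ω : Set (Rn n)) (t : ℝ) : Set (Rn n) :=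
  {y | Metric.infDist y Ω < t}

/-- The energy functional `𝒢(u, Ω)` (as an extended real). -/
def calG (n : ℕ) (s : ℝ) (Ω : Set (Rn n)) (u : Rn n → ℝ) : ℝ≥0∞ :=
  (1 / 2 : ℝ≥0∞) * ∫⁻ p in QQ Ω,
    ENNReal.ofReal (|u p.1 - u p.2| / dist p.1 p.2 ^ ((n : ℝ) + s))

open Classical in
/-- `ũ`: equal to `u` on `𝒞Ω` and to `0` on `Ω`. -/
def tildeF {n : ℕ} (Ω : Set (Rn n)) (u : Rn n → ℝ) : Rn n → ℝ :=
  fun x => if x ∈ Ω then 0 else u x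

/-- The renormalised energy functional `𝒢̃(u, Ω)`. -/
def calGt (n : ℕ) (s : ℝ) (Ω : Set (Rn n)) (u : Rn n → ℝ) : ℝ :=
  (1 / 2 : ℝ) * ∫ p in QQ Ω,
    (|u p.1 - u p.2| - |tildeF Ω u p.1 - tildeF Ω u p.2|) / dist p.1 p.2 ^ ((n : ℝ) + s)

/-- The global tail `𝒯_s(u, Ω)` (as an extended real). -/
def tailS (n : ℕ) (s : ℝ) (Ω : Set (Rn n)) (u : Rn n → ℝ) : ℝ≥0∞ :=
  ∫⁻ x in Ω, ∫⁻ y in Ωᶜ, ENNReal.ofReal (|u y| / dist x y ^ ((n : ℝ) + s))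

/-- The local tail `∫_A |φ(y)|/|x−y|^{n+s} dy`, integrated over `x ∈ Ω`. -/
def tailInt (n : ℕ) (s : ℝ) (Ω A : Set (Rn n)) (φ : Rn n → ℝ) : ℝ≥0∞ :=
  ∫⁻ x in Ω, ∫⁻ y in A, ENNReal.ofReal (|φ y| / dist x y ^ ((n : ℝ) + s))

namespace MaxMinAux

lemma submod_num {n : ℕ} (E F : Set (Rn n)) (x y : Rn n) :
    |chi (E ∪ F) x - chi (E ∪ F) y| + |chi (E ∩ F) x - chi (E ∩ F) y| ≤
      |chi E x - chi E y| + |chi F x - chi F y| := by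
  simp only [chi, Set.indicator_apply, Set.mem_union, Set.mem_inter_iff]
  by_cases hxE : x ∈ E <;> by_cases hxF : x ∈ F <;>
    by_cases hyE : y ∈ E <;> by_cases hyF : y ∈ F <;>
    simp [hxE, hxF, hyE, hyF] <;> norm_num

lemma chi_congr {n : ℕ} {A B : Set (Rn n)} {x : Rn n} (h : x ∈ A ↔ x ∈ B) :
    chi A x = chi B x := by
  by_cases hx : x ∈ A
  · rw [chi, chi, Set.indicator_of_mem hx, Set.indicator_of_mem (h.mp hx)]
  · rw [chi, chi, Set.indicator_of_notMem hx,
      Set.indicator_of_notMem (fun hb => hx (h.mpr hb))]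

def integrandFn (n : ℕ) (s : ℝ) (A : Set (Rn n)) : Rn n × Rn n → ℝ≥0∞ :=
  fun p => ENNReal.ofReal (|chi A p.1 - chi A p.2| / dist p.1 p.2 ^ ((n : ℝ) + s))

lemma integrand_measurable {n : ℕ} {s : ℝ} (hs : 0 ≤ (n : ℝ) + s) {A : Set (Rn n)} (hA : MeasurableSet A) :
    Measurable (integrandFn n s A) := by
  apply Measurable.ennreal_ofReal
  apply Measurable.div
  · exact (((measurable_const.indicator hA).comp measurable_fst).sub
      ((measurable_const.indicator hA).comp measurable_snd)).abs
  · exact (Real.continuous_rpow_const hs).measurable.comp measurable_dist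

def linteg (n : ℕ) (s : ℝ) (Ω A : Set (Rn n)) : ℝ≥0∞ :=
  ∫⁻ p in QQ Ω, integrandFn n s A p

lemma perS_eq (n : ℕ) (s : ℝ) (Ω A : Set (Rn n)) :
    perS n s Ω A = (1 / 2 : ℝ≥0∞) * linteg n s Ω A := rfl

lemma perS_le_perS_iff {n : ℕ} {s : ℝ} {Ω A B : Set (Rn n)} :
    perS n s Ω A ≤ perS n s Ω B ↔ linteg n s Ω A ≤ linteg n s Ω B := by
  rw [perS_eq, perS_eq, ENNReal.mul_le_mul_iff_right (by norm_num) (by norm_num)]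

lemma integrand_submod {n : ℕ} {s : ℝ} (E F : Set (Rn n)) (p : Rn n × Rn n) :
    integrandFn n s (E ∪ F) p + integrandFn n s (E ∩ F) p ≤
      integrandFn n s E p + integrandFn n s F p := by
  unfold integrandFn
  have hd : (0:ℝ) ≤ dist p.1 p.2 ^ ((n : ℝ) + s) := Real.rpow_nonneg dist_nonneg _
  rw [← ENNReal.ofReal_add (by positivity) (by positivity),
      ← ENNReal.ofReal_add (by positivity) (by positivity)]
  apply ENNReal.ofReal_le_ofReal
  rw [← add_div, ← add_div]
  exact div_le_div_of_nonneg_right (submod_num E F p.1 p.2) hd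

lemma perS_submod {n : ℕ} {s : ℝ} (hs : 0 ≤ (n : ℝ) + s) {Ω : Set (Rn n)} {E F : Set (Rn n)}
    (hE : MeasurableSet E) (hF : MeasurableSet F) :
    perS n s Ω (E ∪ F) + perS n s Ω (E ∩ F) ≤ perS n s Ω E + perS n s Ω F := by
  rw [perS_eq, perS_eq, perS_eq, perS_eq, ← mul_add, ← mul_add]
  apply mul_le_mul_right
  unfold linteg
  rw [← lintegral_add_left (integrand_measurable hs (hE.union hF)),
      ← lintegral_add_left (integrand_measurable hs hE)]
  exact lintegral_mono fun p => integrand_submod E F p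

lemma mem_closure' {n : ℕ} {s : ℝ} (hs : 0 ≤ (n : ℝ) + s) {Ω : Set (Rn n)} {E F : Set (Rn n)}
    (hE : IsMinimalSet n s Ω E) (hF : IsMinimalSet n s Ω F) (hEF : F \ Ω = E \ Ω) :
    IsMinimalSet n s Ω (E ∪ F) ∧ IsMinimalSet n s Ω (E ∩ F) := by
  obtain ⟨hEm, hEfin, hEmin⟩ := hE
  obtain ⟨hFm, hFfin, hFmin⟩ := hF
  have hU : (E ∪ F) \ Ω = E \ Ω := by
    rw [Set.union_diff_distrib, hEF, Set.union_self]
  have hI : (E ∩ F) \ Ω = E \ Ω := by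
    have hEF' := Set.ext_iff.mp hEF
    ext x
    simp only [Set.mem_diff, Set.mem_inter_iff] at *
    constructor
    · rintro ⟨⟨h1, _⟩, h3⟩; exact ⟨h1, h3⟩
    · rintro ⟨h1, h3⟩
      exact ⟨⟨h1, ((hEF' x).mpr ⟨h1, h3⟩).1⟩, h3⟩
  have hI' : (E ∩ F) \ Ω = F \ Ω := by rw [hI, ← hEF]
  have h1 : perS n s Ω E ≤ perS n s Ω (E ∪ F) := hEmin _ (hEm.union hFm) hU
  have h2 : perS n s Ω F ≤ perS n s Ω (E ∩ F) := hFmin _ (hEm.inter hFm) hI'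
  have h3 := perS_submod (Ω := Ω) (s := s) hs hEm hFm
  have hIfin : perS n s Ω (E ∩ F) ≠ ⊤ := by
    refine ne_top_of_le_ne_top ?_ (le_trans le_add_self h3)
    exact (ENNReal.add_lt_top.mpr ⟨hEfin, hFfin⟩).ne
  have hUeq : perS n s Ω (E ∪ F) = perS n s Ω E := by
    refine le_antisymm ?_ h1
    have : perS n s Ω (E ∪ F) + perS n s Ω (E ∩ F) ≤ perS n s Ω E + perS n s Ω (E ∩ F) :=
      le_trans h3 (add_le_add_right h2 _)
    exact (ENNReal.add_le_add_iff_right hIfin).mp this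
  have hIeq : perS n s Ω (E ∩ F) = perS n s Ω F := by
    refine le_antisymm ?_ h2
    have : perS n s Ω E + perS n s Ω (E ∩ F) ≤ perS n s Ω E + perS n s Ω F :=
      le_trans (add_le_add_left h1 _) h3
    exact (ENNReal.add_le_add_iff_left hEfin.ne).mp this
  constructor
  · exact ⟨hEm.union hFm, hUeq ▸ hEfin, fun H hHm hHd => by
      rw [hUeq]; exact hEmin H hHm (by rw [hHd, hU])⟩
  · exact ⟨hEm.inter hFm, hIeq ▸ hFfin, fun H hHm hHd => by
      rw [hIeq]; exact hFmin H hHm (by rw [hHd, hI'])⟩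

lemma perS_le_of_limit {n : ℕ} {s : ℝ} (hs : 0 ≤ (n : ℝ) + s) {Ω : Set (Rn n)} (G : ℕ → Set (Rn n))
    (hGm : ∀ k, MeasurableSet (G k)) (E : Set (Rn n))
    (hconv : ∀ x : Rn n, ∀ᶠ k in Filter.atTop, (x ∈ G k ↔ x ∈ E))
    (H : Set (Rn n)) (hC : ∀ k, perS n s Ω (G k) ≤ perS n s Ω H) :
    perS n s Ω E ≤ perS n s Ω H := by
  rw [perS_le_perS_iff]
  have hC' : ∀ k, linteg n s Ω (G k) ≤ linteg n s Ω H :=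
    fun k => perS_le_perS_iff.mp (hC k)
  have hpt : ∀ p : Rn n × Rn n, Filter.Tendsto (fun k => integrandFn n s (G k) p)
      Filter.atTop (nhds (integrandFn n s E p)) := by
    intro p
    have hev : (fun k => integrandFn n s (G k) p) =ᶠ[Filter.atTop]
        (fun _ => integrandFn n s E p) := by
      filter_upwards [hconv p.1, hconv p.2] with k hk1 hk2
      unfold integrandFn
      rw [chi_congr hk1, chi_congr hk2]
    exact Filter.Tendsto.congr' hev.symm tendsto_const_nhds
  calc linteg n s Ω E
      = ∫⁻ p in QQ Ω, Filter.liminf (fun k => integrandFn n s (G k) p) Filter.atTop := by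
        exact lintegral_congr fun p => ((hpt p).liminf_eq).symm
    _ ≤ Filter.liminf (fun k => linteg n s Ω (G k)) Filter.atTop :=
        lintegral_liminf_le fun k => integrand_measurable hs (hGm k)
    _ ≤ _ := by
        refine le_trans (Filter.liminf_le_liminf (Filter.Eventually.of_forall hC')) ?_
        simp [Filter.liminf_const]

end MaxMinAux
theorem maximal_and_minimal_minimal_sets
    (n : ℕ) (hn : 1 ≤ n) (s : ℝ) (hs : s ∈ Set.Ioo (0 : ℝ) 1)
    (Ω : Set (Rn n)) (hΩo : IsOpen Ω) (hΩb : Bornology.IsBounded Ω)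
    (hΩl : HasLipschitzBoundary Ω)
    (E₀ : Set (Rn n)) (hE₀ : E₀ ⊆ Ωᶜ)
    (Fam : Set (Set (Rn n)))
    (hFam : Fam = {E : Set (Rn n) | IsMinimalSet n s Ω E ∧ E \ Ω = E₀})
    (hne : Fam.Nonempty) :
    (∃ E ∈ Fam,
      (volume (E ∩ Ω) = ⨆ F ∈ Fam, volume (F ∩ Ω)) ∧
      (∀ E' ∈ Fam, (volume (E' ∩ Ω) = ⨆ F ∈ Fam, volume (F ∩ Ω)) →
        volume (symmDiff E E') = 0) ∧
      (∀ F ∈ Fam, volume (F \ E) = 0)) ∧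
    (∃ E' ∈ Fam,
      (volume (E' ∩ Ω) = ⨅ F ∈ Fam, volume (F ∩ Ω)) ∧
      (∀ E'' ∈ Fam, (volume (E'' ∩ Ω) = ⨅ F ∈ Fam, volume (F ∩ Ω)) →
        volume (symmDiff E' E'') = 0) ∧
      (∀ F ∈ Fam, volume (E' \ F) = 0)) := by
  subst hFam
  have hs' : (0:ℝ) ≤ (n : ℝ) + s := by
    have := hs.1.le; positivity
  have hΩfin : volume Ω < ⊤ := hΩb.measure_lt_top
  -- membership facts
  have hmem : ∀ A : Set (Rn n),
      A ∈ {E : Set (Rn n) | IsMinimalSet n s Ω E ∧ E \ Ω = E₀} ↔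
        IsMinimalSet n s Ω A ∧ A \ Ω = E₀ := fun A => Iff.rfl
  -- closure under union and intersection
  have hclos : ∀ A B : Set (Rn n),
      (IsMinimalSet n s Ω A ∧ A \ Ω = E₀) → (IsMinimalSet n s Ω B ∧ B \ Ω = E₀) →
      (IsMinimalSet n s Ω (A ∪ B) ∧ (A ∪ B) \ Ω = E₀) ∧
      (IsMinimalSet n s Ω (A ∩ B) ∧ (A ∩ B) \ Ω = E₀) := by
    intro A B hA hB
    have hd : B \ Ω = A \ Ω := by rw [hA.2, hB.2]
    obtain ⟨hU, hI⟩ := MaxMinAux.mem_closure' hs' hA.1 hB.1 hd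
    have hUd : (A ∪ B) \ Ω = E₀ := by
      rw [Set.union_diff_distrib, hA.2, hB.2, Set.union_self]
    have hId : (A ∩ B) \ Ω = E₀ := by
      rw [← hA.2]
      ext x
      simp only [Set.mem_diff, Set.mem_inter_iff]
      have hd' := Set.ext_iff.mp hd x
      simp only [Set.mem_diff] at hd'
      constructor
      · rintro ⟨⟨h1, _⟩, h3⟩; exact ⟨h1, h3⟩
      · rintro ⟨h1, h3⟩; exact ⟨⟨h1, (hd'.mpr ⟨h1, h3⟩).1⟩, h3⟩
    exact ⟨⟨hU, hUd⟩, ⟨hI, hId⟩⟩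
  -- subset facts
  have hdiffsub : ∀ A B : Set (Rn n), (A \ Ω = E₀) → (B \ Ω = E₀) → B \ A ⊆ Ω := by
    intro A B hA hB x hx
    by_contra hxΩ
    have h1 : x ∈ B \ Ω := ⟨hx.1, hxΩ⟩
    rw [hB, ← hA] at h1
    exact hx.2 h1.1
  constructor
  · -- Maximal element
    set M := ⨆ F ∈ {E : Set (Rn n) | IsMinimalSet n s Ω E ∧ E \ Ω = E₀}, volume (F ∩ Ω) with hMdef
    have hMle : M ≤ volume Ω := by
      refine iSup₂_le fun F _ => measure_mono Set.inter_subset_right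
    have hMt : M ≠ ⊤ := (lt_of_le_of_lt hMle hΩfin).ne
    have hsel : ∀ k : ℕ, ∃ F : Set (Rn n),
        (IsMinimalSet n s Ω F ∧ F \ Ω = E₀) ∧
          M - ((k : ℝ≥0∞) + 1)⁻¹ ≤ volume (F ∩ Ω) := by
      intro k
      rcases eq_or_ne M 0 with h0 | h0
      · obtain ⟨F, hF⟩ := hne
        exact ⟨F, hF, by simp [h0]⟩
      · have hlt : M - ((k : ℝ≥0∞) + 1)⁻¹ < M :=
          ENNReal.sub_lt_self hMt h0 (by simp)
        rw [hMdef] at hlt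
        simp only [lt_iSup_iff] at hlt
        obtain ⟨F, hF, hFlt⟩ := hlt
        exact ⟨F, hF, hFlt.le⟩
    choose Fk hFk₁ hFk₂ using hsel
    set G : ℕ → Set (Rn n) :=
      fun k => Nat.rec (motive := fun _ => Set (Rn n)) (Fk 0)
        (fun k Gk => Gk ∪ Fk (k + 1)) k with hGdef
    have hG0 : G 0 = Fk 0 := rfl
    have hGsucc : ∀ k, G (k + 1) = G k ∪ Fk (k + 1) := fun k => rfl
    have hGFam : ∀ k, IsMinimalSet n s Ω (G k) ∧ G k \ Ω = E₀ := by
      intro k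
      induction k with
      | zero => exact hFk₁ 0
      | succ k ih => exact (hclos (G k) (Fk (k + 1)) ih (hFk₁ (k + 1))).1
    have hGmono : Monotone G := monotone_nat_of_le_succ fun k => by
      rw [hGsucc]; exact Set.subset_union_left
    have hFG : ∀ k, Fk k ⊆ G k := by
      intro k
      cases k with
      | zero => exact subset_of_eq hG0.symm
      | succ k => rw [hGsucc]; exact Set.subset_union_right
    set E : Set (Rn n) := ⋃ k, G k with hEdef
    have hEmeas : MeasurableSet E := MeasurableSet.iUnion fun k => (hGFam k).1.1
    have hEd : E \ Ω = E₀ := by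
      rw [hEdef, Set.iUnion_diff]
      have h : ∀ k, G k \ Ω = E₀ := fun k => (hGFam k).2
      simp only [h, Set.iUnion_const]
    have hconv : ∀ x : Rn n, ∀ᶠ k in Filter.atTop, (x ∈ G k ↔ x ∈ E) := by
      intro x
      by_cases hx : x ∈ E
      · obtain ⟨k0, hk0⟩ := Set.mem_iUnion.mp hx
        filter_upwards [Filter.eventually_ge_atTop k0] with k hk
        exact iff_of_true (hGmono hk hk0) hx
      · exact Filter.Eventually.of_forall fun k =>
          iff_of_false (fun h => hx (Set.mem_iUnion.mpr ⟨k, h⟩)) hx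
    have hEmin : ∀ H : Set (Rn n), MeasurableSet H → H \ Ω = E \ Ω →
        perS n s Ω E ≤ perS n s Ω H := by
      intro H hHm hHd
      refine MaxMinAux.perS_le_of_limit hs' G (fun k => (hGFam k).1.1) E hconv H ?_
      intro k
      exact (hGFam k).1.2.2 H hHm (by rw [hHd, hEd, (hGFam k).2])
    have hEfin : perS n s Ω E < ⊤ := by
      refine lt_of_le_of_lt (hEmin (G 0) (hGFam 0).1.1 ?_) (hGFam 0).1.2.1
      rw [hEd, (hGFam 0).2]
    have hEFam : IsMinimalSet n s Ω E ∧ E \ Ω = E₀ := ⟨⟨hEmeas, hEfin, hEmin⟩, hEd⟩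
    have hEvol : volume (E ∩ Ω) = M := by
      apply le_antisymm
      · exact le_iSup₂ (f := fun F _ => volume (F ∩ Ω)) E hEFam
      · apply ENNReal.le_of_forall_pos_le_add
        intro ε hε hvfin
        obtain ⟨k, hk⟩ := ENNReal.exists_inv_nat_lt
          (show ((ε : ℝ≥0∞)) ≠ 0 by exact_mod_cast hε.ne')
        have h1 : M - ((k : ℝ≥0∞) + 1)⁻¹ ≤ volume (E ∩ Ω) := by
          refine le_trans (hFk₂ k) (measure_mono ?_)
          exact Set.inter_subset_inter_left _ ((hFG k).trans (Set.subset_iUnion G k))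
        have h2 : M ≤ volume (E ∩ Ω) + ((k : ℝ≥0∞) + 1)⁻¹ := tsub_le_iff_right.mp h1
        refine h2.trans (add_le_add_right ?_ _)
        calc ((k : ℝ≥0∞) + 1)⁻¹ ≤ ((k : ℝ≥0∞))⁻¹ :=
              ENNReal.inv_le_inv.mpr le_self_add
          _ ≤ ε := hk.le
    have hmax : ∀ E₁ : Set (Rn n), (IsMinimalSet n s Ω E₁ ∧ E₁ \ Ω = E₀) →
        volume (E₁ ∩ Ω) = M → ∀ F : Set (Rn n),
        (IsMinimalSet n s Ω F ∧ F \ Ω = E₀) → volume (F \ E₁) = 0 := by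
      intro E₁ hE₁ hE₁v F hF
      have hUF := (hclos E₁ F hE₁ hF).1
      have hsub : F \ E₁ ⊆ Ω := hdiffsub E₁ F hE₁.2 hF.2
      have hset : (E₁ ∪ F) ∩ Ω = (E₁ ∩ Ω) ∪ (F \ E₁) := by
        ext x
        simp only [Set.mem_inter_iff, Set.mem_union, Set.mem_diff]
        constructor
        · rintro ⟨h1 | h1, h2⟩
          · exact Or.inl ⟨h1, h2⟩
          · by_cases hE : x ∈ E₁
            · exact Or.inl ⟨hE, h2⟩
            · exact Or.inr ⟨h1, hE⟩
        · rintro (⟨h1, h2⟩ | ⟨h1, h2⟩)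
          · exact ⟨Or.inl h1, h2⟩
          · exact ⟨Or.inr h1, hsub ⟨h1, h2⟩⟩
      have hdisj : Disjoint (E₁ ∩ Ω) (F \ E₁) := by
        rw [Set.disjoint_left]
        rintro x ⟨h1, _⟩ ⟨_, h2⟩
        exact h2 h1
      have hm : volume ((E₁ ∪ F) ∩ Ω) = volume (E₁ ∩ Ω) + volume (F \ E₁) := by
        rw [hset, measure_union hdisj (hF.1.1.diff hE₁.1.1)]
      have hle : volume ((E₁ ∪ F) ∩ Ω) ≤ M :=
        le_iSup₂ (f := fun F _ => volume (F ∩ Ω)) (E₁ ∪ F) hUF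
      rw [hm, hE₁v] at hle
      have : M + volume (F \ E₁) ≤ M + 0 := by simpa using hle
      exact le_antisymm ((ENNReal.add_le_add_iff_left hMt).mp this) zero_le
    refine ⟨E, hEFam, hEvol, ?_, fun F hF => hmax E hEFam hEvol F hF⟩
    intro E' hE' hE'v
    rw [Set.symmDiff_def]
    exact measure_union_null (hmax E' hE' hE'v E hEFam) (hmax E hEFam hEvol E' hE')
  · -- Minimal element
    set m := ⨅ F ∈ {E : Set (Rn n) | IsMinimalSet n s Ω E ∧ E \ Ω = E₀}, volume (F ∩ Ω) with hmdef
    obtain ⟨F0, hF0⟩ := hne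
    have hmle : m ≤ volume Ω := by
      refine le_trans (iInf₂_le F0 hF0) (measure_mono Set.inter_subset_right)
    have hmt : m ≠ ⊤ := (lt_of_le_of_lt hmle hΩfin).ne
    have hsel : ∀ k : ℕ, ∃ F : Set (Rn n),
        (IsMinimalSet n s Ω F ∧ F \ Ω = E₀) ∧
          volume (F ∩ Ω) ≤ m + ((k : ℝ≥0∞) + 1)⁻¹ := by
      intro k
      have hlt : (⨅ F ∈ {E : Set (Rn n) | IsMinimalSet n s Ω E ∧ E \ Ω = E₀},
          volume (F ∩ Ω)) < m + ((k : ℝ≥0∞) + 1)⁻¹ := by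
        rw [← hmdef]
        exact ENNReal.lt_add_right hmt (by simp)
      simp only [iInf_lt_iff] at hlt
      obtain ⟨F, hF, hFlt⟩ := hlt
      exact ⟨F, hF, hFlt.le⟩
    choose Fk hFk₁ hFk₂ using hsel
    set G : ℕ → Set (Rn n) :=
      fun k => Nat.rec (motive := fun _ => Set (Rn n)) (Fk 0)
        (fun k Gk => Gk ∩ Fk (k + 1)) k with hGdef
    have hG0 : G 0 = Fk 0 := rfl
    have hGsucc : ∀ k, G (k + 1) = G k ∩ Fk (k + 1) := fun k => rfl
    have hGFam : ∀ k, IsMinimalSet n s Ω (G k) ∧ G k \ Ω = E₀ := by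
      intro k
      induction k with
      | zero => exact hFk₁ 0
      | succ k ih => exact (hclos (G k) (Fk (k + 1)) ih (hFk₁ (k + 1))).2
    have hGanti : Antitone G := antitone_nat_of_succ_le fun k => by
      rw [hGsucc]; exact Set.inter_subset_left
    have hFG : ∀ k, G k ⊆ Fk k := by
      intro k
      cases k with
      | zero => exact subset_of_eq hG0
      | succ k => rw [hGsucc]; exact Set.inter_subset_right
    set E : Set (Rn n) := ⋂ k, G k with hEdef
    have hEmeas : MeasurableSet E := MeasurableSet.iInter fun k => (hGFam k).1.1
    have hEd : E \ Ω = E₀ := by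
      have h : ∀ k, G k \ Ω = E₀ := fun k => (hGFam k).2
      ext x
      simp only [hEdef, Set.mem_diff, Set.mem_iInter]
      constructor
      · rintro ⟨h1, h2⟩
        rw [← h 0]
        exact ⟨h1 0, h2⟩
      · intro hx
        have hx' : ∀ k, x ∈ G k \ Ω := fun k => (h k).symm ▸ hx
        exact ⟨fun k => (hx' k).1, (hx' 0).2⟩
    have hconv : ∀ x : Rn n, ∀ᶠ k in Filter.atTop, (x ∈ G k ↔ x ∈ E) := by
      intro x
      by_cases hx : x ∈ E
      · exact Filter.Eventually.of_forall fun k =>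
          iff_of_true (Set.mem_iInter.mp hx k) hx
      · have hex : ∃ k0, x ∉ G k0 := by
          by_contra hc
          push_neg at hc
          exact hx (Set.mem_iInter.mpr hc)
        obtain ⟨k0, hk0⟩ := hex
        filter_upwards [Filter.eventually_ge_atTop k0] with k hk
        exact iff_of_false (fun h => hk0 (hGanti hk h)) hx
    have hEmin : ∀ H : Set (Rn n), MeasurableSet H → H \ Ω = E \ Ω →
        perS n s Ω E ≤ perS n s Ω H := by
      intro H hHm hHd
      refine MaxMinAux.perS_le_of_limit hs' G (fun k => (hGFam k).1.1) E hconv H ?_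
      intro k
      exact (hGFam k).1.2.2 H hHm (by rw [hHd, hEd, (hGFam k).2])
    have hEfin : perS n s Ω E < ⊤ := by
      refine lt_of_le_of_lt (hEmin (G 0) (hGFam 0).1.1 ?_) (hGFam 0).1.2.1
      rw [hEd, (hGFam 0).2]
    have hEFam : IsMinimalSet n s Ω E ∧ E \ Ω = E₀ := ⟨⟨hEmeas, hEfin, hEmin⟩, hEd⟩
    have hEvol : volume (E ∩ Ω) = m := by
      apply le_antisymm
      · apply ENNReal.le_of_forall_pos_le_add
        intro ε hε hmfin
        obtain ⟨k, hk⟩ := ENNReal.exists_inv_nat_lt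
          (show ((ε : ℝ≥0∞)) ≠ 0 by exact_mod_cast hε.ne')
        have h1 : volume (E ∩ Ω) ≤ m + ((k : ℝ≥0∞) + 1)⁻¹ := by
          refine le_trans (measure_mono ?_) (hFk₂ k)
          exact Set.inter_subset_inter_left _ ((Set.iInter_subset G k).trans (hFG k))
        refine h1.trans (add_le_add_right ?_ _)
        calc ((k : ℝ≥0∞) + 1)⁻¹ ≤ ((k : ℝ≥0∞))⁻¹ :=
              ENNReal.inv_le_inv.mpr le_self_add
          _ ≤ ε := hk.le
      · exact iInf₂_le (f := fun F _ => volume (F ∩ Ω)) E hEFam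
    have hmin : ∀ E₁ : Set (Rn n), (IsMinimalSet n s Ω E₁ ∧ E₁ \ Ω = E₀) →
        volume (E₁ ∩ Ω) = m → ∀ F : Set (Rn n),
        (IsMinimalSet n s Ω F ∧ F \ Ω = E₀) → volume (E₁ \ F) = 0 := by
      intro E₁ hE₁ hE₁v F hF
      have hIF := (hclos E₁ F hE₁ hF).2
      have hsub : E₁ \ F ⊆ Ω := hdiffsub F E₁ hF.2 hE₁.2
      have hset : E₁ ∩ Ω = ((E₁ ∩ F) ∩ Ω) ∪ (E₁ \ F) := by
        ext x
        simp only [Set.mem_inter_iff, Set.mem_union, Set.mem_diff]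
        constructor
        · rintro ⟨h1, h2⟩
          by_cases hxF : x ∈ F
          · exact Or.inl ⟨⟨h1, hxF⟩, h2⟩
          · exact Or.inr ⟨h1, hxF⟩
        · rintro (⟨⟨h1, _⟩, h2⟩ | h1)
          · exact ⟨h1, h2⟩
          · exact ⟨h1.1, hsub h1⟩
      have hdisj : Disjoint ((E₁ ∩ F) ∩ Ω) (E₁ \ F) := by
        rw [Set.disjoint_left]
        rintro x ⟨⟨_, h1⟩, _⟩ ⟨_, h2⟩
        exact h2 h1
      have hm' : volume (E₁ ∩ Ω) = volume ((E₁ ∩ F) ∩ Ω) + volume (E₁ \ F) := by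
        rw [hset, measure_union hdisj (hE₁.1.1.diff hF.1.1)]
      have hge : m ≤ volume ((E₁ ∩ F) ∩ Ω) :=
        iInf₂_le (f := fun F _ => volume (F ∩ Ω)) (E₁ ∩ F) hIF
      have hle : m + volume (E₁ \ F) ≤ m + 0 := by
        calc m + volume (E₁ \ F) ≤ volume ((E₁ ∩ F) ∩ Ω) + volume (E₁ \ F) :=
              add_le_add_left hge _
          _ = volume (E₁ ∩ Ω) := hm'.symm
          _ = m + 0 := by rw [hE₁v, add_zero]
      exact le_antisymm ((ENNReal.add_le_add_iff_left hmt).mp hle) zero_le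
    refine ⟨E, hEFam, hEvol, ?_, fun F hF => hmin E hEFam hEvol F hF⟩
    intro E' hE' hE'v
    rw [Set.symmDiff_def]
    exact measure_union_null (hmin E hEFam hEvol E' hE') (hmin E' hE' hE'v E hEFam)

end
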